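/- Let (G,∘) be a group. The assignment · ↦ ρ·(G) is a bijection from the set of group operations · on G such that (G,·,∘) is a skew brace onto the set of regular subgroups of Perm(G) that are normalised by λ∘(G). -/

import Mathlib

def IsSkewBrace {G : Type*} (dot circ : Group G) : Prop :=
  ∀ σ τ κ : G,
    circ.mul σ (dot.mul τ κ) =
      dot.mul (dot.mul (circ.mul σ τ) (dot.inv σ)) (circ.mul σ κ)

def gammaFun {G : Type*} (dot circ : Group G) (σ τ : G) : G :=
  dot.mul (dot.inv σ) (circ.mul σ τ)

def IsSubgroupOf {G : Type*} (S : Group G) (H : Set G) : Prop :=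
  S.one ∈ H ∧ (∀ a ∈ H, ∀ b ∈ H, S.mul a b ∈ H) ∧ (∀ a ∈ H, S.inv a ∈ H)

def IsLeftIdeal {G : Type*} (dot circ : Group G) (H : Set G) : Prop :=
  IsSubgroupOf dot H ∧ ∀ σ : G, ∀ τ ∈ H, gammaFun dot circ σ τ ∈ H

def IsStrongLeftIdeal {G : Type*} (dot circ : Group G) (H : Set G) : Prop :=
  IsLeftIdeal dot circ H ∧
    ∀ σ : G, ∀ τ ∈ H, dot.mul (dot.mul σ τ) (dot.inv σ) ∈ H

def IsCharacteristicSubgroupOf {G : Type*} (S : Group G) (H : Set G) : Prop :=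
  IsSubgroupOf S H ∧
    ∀ f : G ≃ G, (∀ a b : G, f (S.mul a b) = S.mul (f a) (f b)) → ∀ a ∈ H, f a ∈ H

def oppGroup {G : Type*} (dot : Group G) : Group G :=
  letI := dot
  { mul := fun a b => b * a
    one := (1 : G)
    inv := fun a => a⁻¹
    div := fun a b => b⁻¹ * a
    div_eq_mul_inv := fun _ _ => rfl
    mul_assoc := fun a b c => (mul_assoc c b a).symm
    one_mul := fun a => mul_one a
    mul_one := fun a => one_mul a
    inv_mul_cancel := fun a => mul_inv_cancel a
    npow := fun n x => @npowRec G ⟨(1 : G)⟩ ⟨fun a b => b * a⟩ n x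
    npow_zero := fun _ => rfl
    npow_succ := fun _ _ => rfl
    zpow := fun n x => @zpowRec G ⟨(1 : G)⟩ ⟨fun a b => b * a⟩ ⟨fun a => a⁻¹⟩
      (@npowRec G ⟨(1 : G)⟩ ⟨fun a b => b * a⟩) n x
    zpow_zero' := fun _ => rfl
    zpow_succ' := fun _ _ => rfl
    zpow_neg' := fun _ _ => rfl }

def lam {G : Type*} (S : Group G) (σ : G) : Equiv.Perm G :=
  letI := S; Equiv.mulLeft σ

def rho {G : Type*} (S : Group G) (σ : G) : Equiv.Perm G :=
  letI := S; Equiv.mulRight σ⁻¹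


section helpers
variable {G : Type*}

theorem gassoc (S : Group G) (a b c : G) : S.mul (S.mul a b) c = S.mul a (S.mul b c) := by
  letI := S; exact mul_assoc a b c
theorem gone_mul (S : Group G) (a : G) : S.mul S.one a = a := by letI := S; exact one_mul a
theorem gmul_one (S : Group G) (a : G) : S.mul a S.one = a := by letI := S; exact mul_one a
theorem ginv_mul (S : Group G) (a : G) : S.mul (S.inv a) a = S.one := by
  letI := S; exact inv_mul_cancel a
theorem gmul_inv (S : Group G) (a : G) : S.mul a (S.inv a) = S.one := by
  letI := S; exact mul_inv_cancel a
theorem ginv_inv (S : Group G) (a : G) : S.inv (S.inv a) = a := by letI := S; exact inv_inv a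
theorem ginv_one (S : Group G) : S.inv S.one = S.one := by letI := S; exact inv_one
theorem gmul_inv_rev (S : Group G) (a b : G) :
    S.inv (S.mul a b) = S.mul (S.inv b) (S.inv a) := by letI := S; exact mul_inv_rev a b
theorem ginv_injective (S : Group G) : Function.Injective S.inv := by
  letI := S; exact inv_injective

theorem rho_apply (S : Group G) (σ x : G) : rho S σ x = S.mul x (S.inv σ) := rfl
theorem lam_apply (S : Group G) (σ x : G) : lam S σ x = S.mul σ x := rfl

theorem rho_mul (S : Group G) (σ τ : G) :
    rho S σ * rho S τ = rho S (S.mul σ τ) := by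
  ext x
  rw [Equiv.Perm.mul_apply, rho_apply, rho_apply, rho_apply, gmul_inv_rev S, ← gassoc S]

theorem rho_one (S : Group G) : rho S S.one = 1 := by
  ext x
  rw [rho_apply, ginv_one S, gmul_one S, Equiv.Perm.one_apply]

theorem rho_inv (S : Group G) (σ : G) : (rho S σ)⁻¹ = rho S (S.inv σ) := by
  apply inv_eq_of_mul_eq_one_right
  rw [rho_mul, gmul_inv S, rho_one]

theorem lam_inv (S : Group G) (σ : G) : (lam S σ)⁻¹ = lam S (S.inv σ) := by
  apply inv_eq_of_mul_eq_one_right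
  ext x
  rw [Equiv.Perm.mul_apply, lam_apply, lam_apply, ← gassoc S, gmul_inv S, gone_mul S,
    Equiv.Perm.one_apply]

theorem brace_one {dot circ : Group G} (h : IsSkewBrace dot circ) : dot.one = circ.one := by
  have h1 := h circ.one dot.one dot.one
  rw [gone_mul circ, gone_mul circ, gmul_one dot, gmul_one dot, gone_mul dot] at h1
  have h2 := congrArg dot.inv h1
  rw [ginv_one dot, ginv_inv dot] at h2
  exact h2

theorem conj_rho {dot circ : Group G} (h : IsSkewBrace dot circ) (σ τ : G) :
    lam circ σ * rho dot τ * (lam circ σ)⁻¹ =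
      rho dot (dot.inv (dot.mul (dot.inv σ) (circ.mul σ (dot.inv τ)))) := by
  ext x
  rw [Equiv.Perm.mul_apply, Equiv.Perm.mul_apply, rho_apply, rho_apply, lam_apply,
    ginv_inv dot]
  have hx : circ.mul σ ((lam circ σ)⁻¹ x) = x := Equiv.apply_symm_apply (lam circ σ) x
  rw [h σ ((lam circ σ)⁻¹ x) (dot.inv τ), hx, gassoc dot]

end helpers

def braceOfReg {G : Type*} (circ : Group G) (δ : G → Equiv.Perm G)
    (hδe : ∀ b, δ b circ.one = b) (key : ∀ b c, δ c * δ b = δ (δ c b))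
    (hδone : δ circ.one = 1) : Group G where
  mul a b := δ b a
  one := circ.one
  inv a := (δ a)⁻¹ circ.one
  div a b := δ ((δ b)⁻¹ circ.one) a
  div_eq_mul_inv _ _ := rfl
  mul_assoc a b c := by
    show δ c (δ b a) = δ (δ c b) a
    rw [← key]
    exact (Equiv.Perm.mul_apply _ _ _).symm
  one_mul a := hδe a
  mul_one a := by
    show δ circ.one a = a
    rw [hδone]
    exact Equiv.Perm.one_apply a
  inv_mul_cancel a := by
    show δ a ((δ a)⁻¹ circ.one) = circ.one
    exact Equiv.apply_symm_apply _ _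
  npow := fun n x => @npowRec G ⟨circ.one⟩ ⟨fun a b => δ b a⟩ n x
  npow_zero := fun _ => rfl
  npow_succ := fun _ _ => rfl
  zpow := fun n x => @zpowRec G ⟨circ.one⟩ ⟨fun a b => δ b a⟩ ⟨fun a => (δ a)⁻¹ circ.one⟩
    (@npowRec G ⟨circ.one⟩ ⟨fun a b => δ b a⟩) n x
  zpow_zero' := fun _ => rfl
  zpow_succ' := fun _ _ => rfl
  zpow_neg' := fun _ _ => rfl

theorem braceOfReg_range {G : Type*} (circ : Group G) (N : Set (Equiv.Perm G))
    (δ : G → Equiv.Perm G) (hδe : ∀ b, δ b circ.one = b)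
    (key : ∀ b c, δ c * δ b = δ (δ c b)) (hδone : δ circ.one = 1)
    (hδN : ∀ b, δ b ∈ N) (huniq : ∀ η ∈ N, δ (η circ.one) = η) :
    Set.range (rho (braceOfReg circ δ hδe key hδone)) = N := by
  set dot := braceOfReg circ δ hδe key hδone with hd
  have hrho : ∀ σ : G, rho dot σ = δ (dot.inv σ) := fun σ => Equiv.ext fun x => rfl
  ext η
  constructor
  · rintro ⟨σ, rfl⟩
    rw [hrho]
    exact hδN _
  · intro hη
    refine ⟨dot.inv (η circ.one), ?_⟩
    rw [hrho, ginv_inv dot]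
    exact huniq η hη

theorem braceOfReg_isSkewBrace {G : Type*} (circ : Group G) (N : Set (Equiv.Perm G))
    (δ : G → Equiv.Perm G) (hδe : ∀ b, δ b circ.one = b)
    (key : ∀ b c, δ c * δ b = δ (δ c b)) (hδone : δ circ.one = 1)
    (hδN : ∀ b, δ b ∈ N) (huniq : ∀ η ∈ N, δ (η circ.one) = η)
    (hconj : ∀ σ : G, (fun π : Equiv.Perm G => lam circ σ * π * (lam circ σ)⁻¹) '' N = N) :
    IsSkewBrace (braceOfReg circ δ hδe key hδone) circ := by
  set dot := braceOfReg circ δ hδe key hδone with hd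
  intro σ τ κ
  have hc : lam circ σ * δ κ * (lam circ σ)⁻¹ ∈ N := by
    rw [← hconj σ]
    exact ⟨δ κ, hδN κ, rfl⟩
  have hηc := huniq _ hc
  set c := (lam circ σ * δ κ * (lam circ σ)⁻¹) circ.one with hcdef
  have hA : ∀ y : G, circ.mul σ (δ κ y) = δ c (circ.mul σ y) := by
    intro y
    rw [hηc, Equiv.Perm.mul_apply, Equiv.Perm.mul_apply]
    have hy : (lam circ σ)⁻¹ (circ.mul σ y) = y := Equiv.symm_apply_apply (lam circ σ) y
    rw [hy]
    rfl
  have hB : circ.mul σ κ = dot.mul σ c := by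
    have h0 := hA circ.one
    rw [hδe κ, gmul_one circ] at h0
    exact h0
  calc circ.mul σ (dot.mul τ κ) = circ.mul σ (δ κ τ) := rfl
    _ = δ c (circ.mul σ τ) := hA τ
    _ = dot.mul (circ.mul σ τ) c := rfl
    _ = dot.mul (dot.mul (circ.mul σ τ) (dot.inv σ)) (circ.mul σ κ) := by
        rw [hB, ← gassoc dot, gassoc dot (circ.mul σ τ) (dot.inv σ) σ, ginv_mul dot,
          gmul_one dot]


/-- For a group `(G,∘)`, the assignment `· ↦ ρ·(G)` is a bijection
from group operations `·` on `G` making `(G,·,∘)` a skew brace onto the regular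
subgroups of `Perm G` normalised by `λ∘(G)`. -/
theorem stmt1 {G : Type*} (circ : Group G) :
    Set.BijOn (fun dot : Group G => Set.range (rho dot))
      {dot : Group G | IsSkewBrace dot circ}
      {N : Set (Equiv.Perm G) |
        IsSubgroupOf inferInstance N ∧
        Set.BijOn (fun η : Equiv.Perm G => η circ.one) N Set.univ ∧
        ∀ σ : G, (fun π : Equiv.Perm G => lam circ σ * π * (lam circ σ)⁻¹) '' N = N} := by
  classical
  refine ⟨?_, ?_, ?_⟩
  · -- MapsTo
    intro dot hdot
    have hdot : IsSkewBrace dot circ := hdot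
    have hone : dot.one = circ.one := brace_one hdot
    refine ⟨⟨⟨dot.one, rho_one dot⟩, ?_, ?_⟩, ⟨fun _ _ => Set.mem_univ _, ?_, ?_⟩, ?_⟩
    · rintro a ⟨σ, rfl⟩ b ⟨τ, rfl⟩
      exact ⟨dot.mul σ τ, (rho_mul dot σ τ).symm⟩
    · rintro a ⟨σ, rfl⟩
      exact ⟨dot.inv σ, (rho_inv dot σ).symm⟩
    · -- InjOn of evaluation
      rintro η1 ⟨σ, rfl⟩ η2 ⟨τ, rfl⟩ hval
      have hval' : rho dot σ circ.one = rho dot τ circ.one := hval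
      rw [rho_apply, rho_apply, ← hone, gone_mul dot, gone_mul dot] at hval'
      exact congrArg (rho dot) (ginv_injective dot hval')
    · -- SurjOn of evaluation
      intro g _
      refine ⟨rho dot (dot.inv g), ⟨dot.inv g, rfl⟩, ?_⟩
      show rho dot (dot.inv g) circ.one = g
      rw [rho_apply, ginv_inv dot, ← hone, gone_mul dot]
    · -- normalisation
      intro σ
      ext η
      simp only [Set.mem_image]
      constructor
      · rintro ⟨π, ⟨τ, rfl⟩, rfl⟩
        rw [conj_rho hdot]
        exact Set.mem_range_self _
      · rintro ⟨τ, rfl⟩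
        refine ⟨lam circ (circ.inv σ) * rho dot τ * (lam circ (circ.inv σ))⁻¹, ?_, ?_⟩
        · rw [conj_rho hdot]
          exact Set.mem_range_self _
        · rw [← lam_inv circ σ]
          group
  · -- InjOn
    intro dot1 h1 dot2 h2 heq
    have h1 : IsSkewBrace dot1 circ := h1
    have h2 : IsSkewBrace dot2 circ := h2
    have e1 : dot1.one = circ.one := brace_one h1
    have e2 : dot2.one = circ.one := brace_one h2
    have heq' : Set.range (rho dot1) = Set.range (rho dot2) := heq
    apply Group.ext
    funext σ τ
    show dot1.mul σ τ = dot2.mul σ τ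
    obtain ⟨κ, hκ⟩ : rho dot1 (dot1.inv τ) ∈ Set.range (rho dot2) :=
      heq' ▸ Set.mem_range_self _
    have hval : rho dot2 κ circ.one = rho dot1 (dot1.inv τ) circ.one :=
      congrArg (fun f : Equiv.Perm G => f circ.one) hκ
    have l1 : dot1.mul circ.one τ = τ := by rw [← e1]; exact gone_mul dot1 τ
    have l2 : dot2.mul circ.one (dot2.inv κ) = dot2.inv κ := by
      rw [← e2]; exact gone_mul dot2 _
    rw [rho_apply, rho_apply, ginv_inv dot1, l1, l2] at hval
    calc dot1.mul σ τ = rho dot1 (dot1.inv τ) σ := by rw [rho_apply, ginv_inv dot1]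
      _ = rho dot2 κ σ := by rw [hκ]
      _ = dot2.mul σ τ := by rw [rho_apply, hval]
  · -- SurjOn
    intro N hN
    obtain ⟨hsub, hbij, hconj⟩ := hN
    have hone_mem : (1 : Equiv.Perm G) ∈ N := hsub.1
    have hmul_mem : ∀ a ∈ N, ∀ b ∈ N, a * b ∈ N := hsub.2.1
    have hex : ∀ b : G, ∃ η ∈ N, η circ.one = b := by
      intro b
      obtain ⟨η, hη, hb⟩ := hbij.2.2 (Set.mem_univ b)
      exact ⟨η, hη, hb⟩
    choose δ hδN hδe using hex
    have huniq : ∀ η ∈ N, δ (η circ.one) = η := by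
      intro η hη
      exact hbij.2.1 (hδN _) hη (hδe _)
    have key : ∀ b c : G, δ c * δ b = δ (δ c b) := by
      intro b c
      have hm : δ c * δ b ∈ N := hmul_mem _ (hδN c) _ (hδN b)
      have h0 := huniq _ hm
      rw [Equiv.Perm.mul_apply, hδe] at h0
      exact h0.symm
    have hδone : δ circ.one = 1 := by
      have h0 := huniq 1 hone_mem
      rw [Equiv.Perm.one_apply] at h0
      exact h0
    exact ⟨braceOfReg circ δ hδe key hδone,
      braceOfReg_isSkewBrace circ N δ hδe key hδone hδN huniq hconj,
      braceOfReg_range circ N δ hδe key hδone hδN huniq⟩
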